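/- Let a,b > 0 be reals. If there is an integer c ∈ ℤ such that 2^{c-1} ≤ a and 2^{-c} ≤ b, then Cov(Lip_{a,b}) = hm(c_min); otherwise Cov(Lip_{a,b}) = 2^{ℵ₀}. -/

import Mathlib

open Cardinal Topology

/-- The least index where two sequences differ. -/
noncomputable def Delta {α : Type*} (x y : ℕ → α) : ℕ := sInf {n | x n ≠ y n}

/-- A set is homogeneous for a pair-coloring `c` if `c` is constant on pairs of
distinct elements of the set. -/
def IsHomog {X : Type*} (c : X → X → Fin 2) (H : Set X) : Prop :=
  ∃ i : Fin 2, ∀ x ∈ H, ∀ y ∈ H, x ≠ y → c x y = i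

/-- The homogeneity number of a pair-coloring: the least cardinality of a family of
homogeneous sets covering the space. -/
noncomputable def hm {X : Type*} (c : X → X → Fin 2) : Cardinal :=
  sInf { κ | ∃ F : Set (Set X), #F = κ ∧ (∀ H ∈ F, IsHomog c H) ∧ ⋃₀ F = Set.univ }

/-- The homogeneity number of the restriction of a coloring to a subset. -/
noncomputable def hmOn {X : Type*} (c : X → X → Fin 2) (Y : Set X) : Cardinal :=
  sInf { κ | ∃ F : Set (Set X), #F = κ ∧ (∀ H ∈ F, H ⊆ Y ∧ IsHomog c H) ∧ ⋃₀ F = Y }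

/-- A pair-coloring is continuous if it is continuous on `X × X` minus the diagonal. -/
def ContColoring {X : Type*} [TopologicalSpace X] (c : X → X → Fin 2) : Prop :=
  Continuous fun p : {q : X × X // q.1 ≠ q.2} => c p.val.1 p.val.2

/-- Symmetry of a pair-coloring on distinct points. -/
def SymmColoring {X : Type*} (c : X → X → Fin 2) : Prop :=
  ∀ x y : X, x ≠ y → c x y = c y x

/-- A continuous pair-coloring is reduced if no nonempty open set is homogeneous. -/
def Reduced {X : Type*} [TopologicalSpace X] (c : X → X → Fin 2) : Prop :=
  ContColoring c ∧ ∀ U : Set X, IsOpen U → U.Nonempty → ¬ IsHomog c U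

/-- The coloring `c_min` on the Cantor space: the parity of the first difference. -/
noncomputable def cmin : (ℕ → Bool) → (ℕ → Bool) → Fin 2 :=
  fun x y => if Even (Delta x y) then 0 else 1

/-- The coloring `c_parity` on the Baire space: the parity of the first difference. -/
noncomputable def cparity : (ℕ → ℕ) → (ℕ → ℕ) → Fin 2 :=
  fun x y => if Even (Delta x y) then 0 else 1

/-- The standard metric on the Cantor space: `dist x y = 2 ^ (-Δ(x, y))` for `x ≠ y`. -/
noncomputable def distC (x y : ℕ → Bool) : ℝ := by classical exact
  if x = y then 0 else (2 : ℝ) ^ (-(Delta x y : ℤ))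

/-- `f` is Lipschitz with constant `a` on the Cantor space. -/
def LipWithC (a : ℝ) (f : (ℕ → Bool) → (ℕ → Bool)) : Prop :=
  ∀ x y : ℕ → Bool, distC (f x) (f y) ≤ a * distC x y

/-- `Cov(Lip_{a,b})`: the least cardinality of a family `F` of `a`-Lipschitz functions
together with a family `G` of `b`-Lipschitz functions on the Cantor space such that for
every pair `(x, y)` either `f x = y` for some `f ∈ F` or `g y = x` for some `g ∈ G`. -/
noncomputable def CovLip (a b : ℝ) : Cardinal :=
  sInf {μ | ∃ F G : Set ((ℕ → Bool) → (ℕ → Bool)),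
    #F + #G = μ ∧ (∀ f ∈ F, LipWithC a f) ∧ (∀ g ∈ G, LipWithC b g) ∧
    ∀ x y : ℕ → Bool, (∃ f ∈ F, f x = y) ∨ (∃ g ∈ G, g y = x)}


namespace GGK



abbrev XX := ℕ → Bool

/-! ### zpow helpers -/

lemma two_zpow_pos (s : ℤ) : (0:ℝ) < 2 ^ s := by positivity

lemma two_zpow_mono {s t : ℤ} (h : s ≤ t) : (2:ℝ)^s ≤ 2^t := by gcongr <;> norm_num

lemma two_zpow_strict {s t : ℤ} (h : s < t) : (2:ℝ)^s < 2^t := by gcongr <;> norm_num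

lemma two_zpow_le_rev {s t : ℤ} (h : (2:ℝ)^s ≤ 2^t) : s ≤ t := by
  by_contra hc
  exact absurd (lt_of_le_of_lt h (two_zpow_strict (by omega))) (lt_irrefl _)

lemma two_zpow_lt_rev {s t : ℤ} (h : (2:ℝ)^s < 2^t) : s < t := by
  by_contra hc
  exact absurd (lt_of_lt_of_le h (two_zpow_mono (by omega))) (lt_irrefl _)

/-! ### Delta and Agree -/

lemma delta_lt_imp {x y : XX} {i : ℕ} (h : i < Delta x y) : x i = y i := by
  by_contra hne
  have hle : Delta x y ≤ i := Nat.sInf_le (show i ∈ {n | x n ≠ y n} from hne)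
  omega

lemma delta_spec {x y : XX} (h : x ≠ y) : x (Delta x y) ≠ y (Delta x y) := by
  have hne : {n | x n ≠ y n}.Nonempty := by
    by_contra hcon
    rw [Set.not_nonempty_iff_eq_empty] at hcon
    apply h; funext n
    by_contra h2
    exact absurd (show n ∈ {n | x n ≠ y n} from h2) (by simp [hcon])
  exact Nat.sInf_mem hne

def Agree (n : ℕ) (x y : XX) : Prop := ∀ i, i < n → x i = y i

lemma agree_refl (n : ℕ) (x : XX) : Agree n x x := fun _ _ => rfl

lemma agree_symm {n : ℕ} {x y : XX} (h : Agree n x y) : Agree n y x := fun i hi => (h i hi).symm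

lemma agree_mono {n m : ℕ} {x y : XX} (hnm : n ≤ m) (h : Agree m x y) : Agree n x y :=
  fun i hi => h i (lt_of_lt_of_le hi hnm)

lemma agree_trans {n : ℕ} {x y z : XX} (h1 : Agree n x y) (h2 : Agree n y z) : Agree n x z :=
  fun i hi => (h1 i hi).trans (h2 i hi)

lemma agree_of_delta_le {x y : XX} {n : ℕ} (h : n ≤ Delta x y) : Agree n x y :=
  fun i hi => delta_lt_imp (lt_of_lt_of_le hi h)

lemma delta_le_of_agree {x y : XX} {n : ℕ} (h : Agree n x y) (hne : x ≠ y) : n ≤ Delta x y := by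
  by_contra hc
  exact delta_spec hne (h _ (by omega))

lemma delta_eq_of {x y : XX} {n : ℕ} (h1 : x n ≠ y n) (h2 : ∀ i, i < n → x i = y i) :
    Delta x y = n := by
  have hne : x ≠ y := fun he => h1 (by rw [he])
  have hle : Delta x y ≤ n := Nat.sInf_le h1
  have hge : n ≤ Delta x y := delta_le_of_agree h2 hne
  omega

lemma delta_comm (x y : XX) : Delta x y = Delta y x := by
  unfold Delta; congr 1; ext n; exact ne_comm

lemma agree_delta_self {x y : XX} : Agree (Delta x y) x y :=
  fun _ hi => delta_lt_imp hi

/-! ### distC -/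

lemma distC_self (x : XX) : distC x x = 0 := by unfold distC; simp

lemma distC_eq {x y : XX} (h : x ≠ y) : distC x y = (2:ℝ) ^ (-(Delta x y : ℤ)) := by
  unfold distC; simp [h]

lemma distC_nonneg (x y : XX) : 0 ≤ distC x y := by
  unfold distC; split
  · exact le_refl 0
  · exact (two_zpow_pos _).le

lemma distC_comm (x y : XX) : distC x y = distC y x := by
  unfold distC
  rcases eq_or_ne x y with h | h
  · simp [h]
  · simp [h, h.symm, delta_comm x y]

lemma dist_le_of_agree {x y : XX} {n : ℕ} (h : Agree n x y) : distC x y ≤ (2:ℝ)^(-(n:ℤ)) := by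
  rcases eq_or_ne x y with he | he
  · rw [he, distC_self]; exact (two_zpow_pos _).le
  · rw [distC_eq he]
    apply two_zpow_mono
    have := delta_le_of_agree h he
    omega

lemma agree_of_dist_le {x y : XX} {t : ℤ} (h : distC x y ≤ (2:ℝ)^t) :
    ∀ k : ℕ, (k:ℤ) < -t → x k = y k := by
  intro k hk
  rcases eq_or_ne x y with he | he
  · rw [he]
  · rw [distC_eq he] at h
    have h2 : -(Delta x y : ℤ) ≤ t := two_zpow_le_rev h
    exact delta_lt_imp (show k < Delta x y by omega)

lemma dist_le_of_forall {x y : XX} {t : ℤ} (h : ∀ k : ℕ, (k:ℤ) < t → x k = y k) :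
    distC x y ≤ (2:ℝ)^(-t) := by
  rcases eq_or_ne x y with he | he
  · rw [he, distC_self]; exact (two_zpow_pos _).le
  · rw [distC_eq he]
    apply two_zpow_mono
    by_contra hc
    exact delta_spec he (h _ (by omega))



/-! ### interleaving -/

def il (u w : XX) : XX := fun n => if n % 2 = 0 then u (n/2) else w (n/2)
def evp (z : XX) : XX := fun i => z (2*i)
def odp (z : XX) : XX := fun i => z (2*i+1)

lemma il_apply (u w : XX) (n : ℕ) : il u w n = if n % 2 = 0 then u (n/2) else w (n/2) := rfl

lemma evp_il (u w : XX) : evp (il u w) = u := by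
  funext i
  rw [evp, il_apply, if_pos (by omega)]
  congr 1; omega

lemma odp_il (u w : XX) : odp (il u w) = w := by
  funext i
  rw [odp, il_apply, if_neg (by omega)]
  congr 1; omega

lemma il_evp_odp (z : XX) : il (evp z) (odp z) = z := by
  funext n
  rw [il_apply]
  by_cases h : n % 2 = 0
  · rw [if_pos h]; unfold evp; congr 1; omega
  · rw [if_neg h]; unfold odp; congr 1; omega

lemma il_inj {u u' w w' : XX} (h : il u w = il u' w') : u = u' ∧ w = w' := by
  constructor
  · rw [← evp_il u w, h, evp_il]
  · rw [← odp_il u w, h, odp_il]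

lemma delta_il_left {u u' w w' : XX} (huv : u ≠ u') (hw : Agree (Delta u u') w w') :
    Delta (il u w) (il u' w') = 2 * Delta u u' := by
  apply delta_eq_of
  · rw [il_apply, il_apply, if_pos (by omega), if_pos (by omega)]
    have h1 : 2 * Delta u u' / 2 = Delta u u' := by omega
    rw [h1]
    exact delta_spec huv
  · intro i hi
    rw [il_apply, il_apply]
    by_cases h : i % 2 = 0
    · rw [if_pos h, if_pos h]
      exact delta_lt_imp (by omega)
    · rw [if_neg h, if_neg h]
      exact hw _ (by omega)

lemma delta_il_right {u u' w w' : XX} (hww : w ≠ w') (hu : Agree (Delta w w' + 1) u u') :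
    Delta (il u w) (il u' w') = 2 * Delta w w' + 1 := by
  apply delta_eq_of
  · rw [il_apply, il_apply, if_neg (by omega), if_neg (by omega)]
    have h1 : (2 * Delta w w' + 1) / 2 = Delta w w' := by omega
    rw [h1]
    exact delta_spec hww
  · intro i hi
    rw [il_apply, il_apply]
    by_cases h : i % 2 = 0
    · rw [if_pos h, if_pos h]
      exact hu _ (by omega)
    · rw [if_neg h, if_neg h]
      exact delta_lt_imp (by omega)

lemma delta_il_min {u u' w w' : XX} (hu : u ≠ u') (hw : w ≠ w') :
    Delta (il u w) (il u' w') = min (2 * Delta u u') (2 * Delta w w' + 1) := by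
  rcases le_or_gt (Delta u u') (Delta w w') with h | h
  · rw [delta_il_left hu (fun i hi => delta_lt_imp (by omega))]
    omega
  · rw [delta_il_right hw (fun i hi => delta_lt_imp (by omega))]
    omega

/-! ### cmin -/

lemma cmin_eq_zero {z z' : XX} (h : Even (Delta z z')) : cmin z z' = 0 := by
  unfold cmin; rw [if_pos h]

lemma cmin_eq_one {z z' : XX} (h : ¬ Even (Delta z z')) : cmin z z' = 1 := by
  unfold cmin; rw [if_neg h]

lemma even_of_cmin_zero {z z' : XX} (h : cmin z z' = 0) : Even (Delta z z') := by
  by_contra hc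
  rw [cmin_eq_one hc] at h
  exact absurd h (by decide)

lemma odd_of_cmin_one {z z' : XX} (h : cmin z z' = 1) : ¬ Even (Delta z z') := by
  intro hc
  rw [cmin_eq_zero hc] at h
  exact absurd h (by decide)

/-! ### pad -/

def pad (m : ℕ) (x : XX) : XX := fun i => if i < m then false else x (i - m)

lemma pad_delta {x y : XX} (h : x ≠ y) (m : ℕ) : Delta (pad m x) (pad m y) = m + Delta x y := by
  apply delta_eq_of
  · unfold pad
    rw [if_neg (by omega), if_neg (by omega)]
    have h1 : m + Delta x y - m = Delta x y := by omega
    rw [h1]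
    exact delta_spec h
  · intro i hi
    unfold pad
    by_cases h2 : i < m
    · rw [if_pos h2, if_pos h2]
    · rw [if_neg h2, if_neg h2]
      exact delta_lt_imp (by omega)

lemma pad_inj {x y : XX} {m : ℕ} (h : pad m x = pad m y) : x = y := by
  funext i
  have := congrFun h (m + i)
  unfold pad at this
  rw [if_neg (by omega), if_neg (by omega)] at this
  simpa [Nat.add_sub_cancel_left] using this

lemma pad_ne {x y : XX} (h : x ≠ y) (m : ℕ) : pad m x ≠ pad m y := fun he => h (pad_inj he)

/-! ### sparse embeddings -/

def E1 (K : ℕ) (u : XX) : XX := fun j => u (j / (2*K))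
def E2 (K : ℕ) (w : XX) : XX := fun j => if j < K then false else w ((j - K) / (2*K))

lemma div2K_lt {K j d : ℕ} (hK : 0 < K) (hj : j < 2*K*d) : j / (2*K) < d := by
  rw [Nat.div_lt_iff_lt_mul (by omega)]
  calc j < 2*K*d := hj
  _ = d * (2*K) := by ring

lemma div2K_eq {K d : ℕ} (hK : 0 < K) : (2*K*d) / (2*K) = d := by
  rw [Nat.mul_div_cancel_left d (by omega : 0 < 2*K)]

lemma delta_E1 {K : ℕ} (hK : 0 < K) {u v : XX} (h : u ≠ v) :
    Delta (E1 K u) (E1 K v) = 2*K*Delta u v := by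
  apply delta_eq_of
  · unfold E1
    rw [div2K_eq hK]
    exact delta_spec h
  · intro i hi
    unfold E1
    exact delta_lt_imp (div2K_lt hK hi)

lemma delta_E2 {K : ℕ} (hK : 0 < K) {w w' : XX} (h : w ≠ w') :
    Delta (E2 K w) (E2 K w') = 2*K*Delta w w' + K := by
  apply delta_eq_of
  · unfold E2
    rw [if_neg (by omega), if_neg (by omega)]
    have h1 : 2*K*Delta w w' + K - K = 2*K*Delta w w' := by omega
    rw [h1, div2K_eq hK]
    exact delta_spec h
  · intro i hi
    unfold E2
    by_cases h2 : i < K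
    · rw [if_pos h2, if_pos h2]
    · rw [if_neg h2, if_neg h2]
      exact delta_lt_imp (div2K_lt hK (by omega))

lemma E1_inj {K : ℕ} (hK : 0 < K) {u v : XX} (h : E1 K u = E1 K v) : u = v := by
  funext i
  have := congrFun h (2*K*i)
  unfold E1 at this
  rwa [div2K_eq hK] at this

lemma E2_inj {K : ℕ} (hK : 0 < K) {w w' : XX} (h : E2 K w = E2 K w') : w = w' := by
  funext i
  have := congrFun h (2*K*i + K)
  unfold E2 at this
  rw [if_neg (by omega), if_neg (by omega)] at this
  have h1 : 2*K*i + K - K = 2*K*i := by omega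
  rwa [h1, div2K_eq hK] at this



/-! ### the Lipschitz extension machinery -/

section Ext

variable (A : Set XX) (hA : A.Nonempty) (φ : XX → XX) (j : ℤ)

def tr (n : ℕ) (x : XX) : XX := fun i => if i < n then x i else false

lemma tr_congr {n : ℕ} {x y : XX} (h : Agree n x y) : tr n x = tr n y := by
  funext i
  unfold tr
  by_cases hi : i < n
  · rw [if_pos hi, if_pos hi]; exact h i hi
  · rw [if_neg hi, if_neg hi]

lemma agree_tr {n : ℕ} {x z : XX} : Agree n (tr n x) z ↔ Agree n x z := by
  constructor
  · intro h i hi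
    have := h i hi
    rwa [tr, if_pos hi] at this
  · intro h i hi
    rw [tr, if_pos hi]
    exact h i hi

open Classical in
noncomputable def pick (n : ℕ) (s : XX) : XX :=
  if h : ∃ z ∈ A, Agree n s z then h.choose else hA.some

lemma pick_mem (n : ℕ) (s : XX) : pick A hA n s ∈ A := by
  unfold pick
  split
  · next h => exact h.choose_spec.1
  · exact hA.some_mem

lemma pick_agree {n : ℕ} {s : XX} (h : ∃ z ∈ A, Agree n s z) : Agree n s (pick A hA n s) := by
  unfold pick
  rw [dif_pos h]
  exact h.choose_spec.2

/-- For `x` with a witness at level `n`, the picked point agrees with `x` to level `n`. -/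
lemma pick_agree' {n : ℕ} {x : XX} (h : ∃ z ∈ A, Agree n x z) :
    Agree n x (pick A hA n (tr n x)) := by
  have h' : ∃ z ∈ A, Agree n (tr n x) z := by
    obtain ⟨z, hz1, hz2⟩ := h
    exact ⟨z, hz1, agree_tr.mpr hz2⟩
  exact agree_tr.mp (pick_agree A hA h')

/-- `x` has arbitrarily deep approximations in `A`. -/
def Rb (x : XX) : Prop := ∀ n, ∃ z ∈ A, Agree n x z

/-- The deepest approximation level, for `x` with `¬ Rb x`. -/
noncomputable def NN (x : XX) : ℕ := sInf {n | ¬ ∃ z ∈ A, Agree (n+1) x z}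

include hA

lemma NN_nonempty {x : XX} (h : ¬ Rb A x) :
    {n | ¬ ∃ z ∈ A, Agree (n+1) x z}.Nonempty := by
  obtain ⟨n, hn⟩ := not_forall.mp h
  rcases n with _ | n
  · exact absurd ⟨hA.some, hA.some_mem, fun i hi => by omega⟩ hn
  · exact ⟨n, hn⟩

lemma NN_spec1 {x : XX} (h : ¬ Rb A x) : ∃ z ∈ A, Agree (NN A x) x z := by
  rcases Nat.eq_zero_or_pos (NN A x) with h0 | h0
  · rw [h0]
    exact ⟨hA.some, hA.some_mem, fun i hi => by omega⟩
  · have h1 : NN A x - 1 ∉ {n | ¬ ∃ z ∈ A, Agree (n+1) x z} := by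
      intro hc
      have h5 : NN A x ≤ NN A x - 1 := Nat.sInf_le hc
      omega
    have h2 : ∃ z ∈ A, Agree (NN A x - 1 + 1) x z := by
      by_contra hc
      exact h1 hc
    have h3 : NN A x - 1 + 1 = NN A x := by omega
    rwa [h3] at h2

lemma NN_spec2 {x : XX} (h : ¬ Rb A x) : ¬ ∃ z ∈ A, Agree (NN A x + 1) x z :=
  Nat.sInf_mem (NN_nonempty A hA h)

lemma NN_max {x : XX} (h : ¬ Rb A x) {n : ℕ} (hn : ∃ z ∈ A, Agree n x z) : n ≤ NN A x := by
  by_contra hc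
  apply NN_spec2 A hA h
  obtain ⟨z, hz1, hz2⟩ := hn
  exact ⟨z, hz1, agree_mono (by omega) hz2⟩

open Classical in
noncomputable def extFun : XX → XX := fun x =>
  if Rb A x then (fun k => φ (pick A hA (k + (j.toNat+1)) (tr (k + (j.toNat+1)) x)) k)
  else φ (pick A hA (NN A x) (tr (NN A x) x))

variable (hφ : ∀ x ∈ A, ∀ y ∈ A, distC (φ x) (φ y) ≤ (2:ℝ)^j * distC x y)

include hφ

/-- key consequence of the Lipschitz property on `A`. -/
lemma ext_key : ∀ z ∈ A, ∀ z' ∈ A, ∀ (n k : ℕ), Agree n z z' → (k:ℤ) + j < n →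
    φ z k = φ z' k := by
  intro z hz z' hz' n k hag hk
  have h1 : distC (φ z) (φ z') ≤ (2:ℝ)^j * distC z z' := hφ z hz z' hz'
  have h2 : distC z z' ≤ (2:ℝ)^(-(n:ℤ)) := dist_le_of_agree hag
  have h3 : distC (φ z) (φ z') ≤ (2:ℝ)^(j + -(n:ℤ)) := by
    rw [zpow_add₀ (by norm_num : (2:ℝ) ≠ 0)]
    calc distC (φ z) (φ z') ≤ (2:ℝ)^j * distC z z' := h1
    _ ≤ (2:ℝ)^j * (2:ℝ)^(-(n:ℤ)) := by
        apply mul_le_mul_of_nonneg_left h2 (two_zpow_pos _).le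
  exact agree_of_dist_le h3 k (by omega)

lemma extFun_agree : ∀ x ∈ A, extFun A hA φ j x = φ x := by
  intro x hx
  have hRb : Rb A x := fun n => ⟨x, hx, agree_refl n x⟩
  unfold extFun
  rw [if_pos hRb]
  funext k
  have hex : ∃ z ∈ A, Agree (k + (j.toNat + 1)) x z := hRb _
  have hag : Agree (k + (j.toNat + 1)) x
      (pick A hA (k + (j.toNat + 1)) (tr (k + (j.toNat + 1)) x)) := pick_agree' A hA hex
  have hmem : pick A hA (k + (j.toNat + 1)) (tr (k + (j.toNat + 1)) x) ∈ A := pick_mem A hA _ _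
  exact (ext_key A hA φ j hφ x hx _ hmem (k + (j.toNat + 1)) k hag (by push_cast; omega)).symm


lemma pointTT {x y : XX} (hxy : Agree (Delta x y) x y) (hRx : Rb A x) (hRy : Rb A y) (k : ℕ)
    (hk : (k:ℤ) < (Delta x y : ℤ) - j) :
    extFun A hA φ j x k = extFun A hA φ j y k := by
  have hm : Agree (Delta x y) x y := hxy
  unfold extFun
  rw [if_pos hRx, if_pos hRy]
  have hagx : Agree (k + (j.toNat+1)) x (pick A hA (k + (j.toNat+1)) (tr (k + (j.toNat+1)) x)) :=
    pick_agree' A hA (hRx _)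
  have hagy : Agree (k + (j.toNat+1)) y (pick A hA (k + (j.toNat+1)) (tr (k + (j.toNat+1)) y)) :=
    pick_agree' A hA (hRy _)
  apply ext_key A hA φ j hφ _ (pick_mem A hA _ _) _ (pick_mem A hA _ _)
      (min (k + (j.toNat+1)) (Delta x y)) k
  · intro i hi
    have h1 := (hagx i (by omega)).symm
    have h2 := hm i (by omega)
    have h3 := hagy i (by omega)
    rw [h1, h2, h3]
  · rcases min_choice (k + (j.toNat+1)) (Delta x y) with h | h
    · rw [h]; push_cast; omega
    · rw [h]; push_cast; omega

lemma pointTF {x y : XX} (hxy : Agree (Delta x y) x y) (hRx : Rb A x) (hRy : ¬ Rb A y) (k : ℕ)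
    (hk : (k:ℤ) < (Delta x y : ℤ) - j) :
    extFun A hA φ j x k = extFun A hA φ j y k := by
  have hm : Agree (Delta x y) x y := hxy
  have hNy : Delta x y ≤ NN A y := by
    apply NN_max A hA hRy
    obtain ⟨z, hz1, hz2⟩ := hRx (Delta x y)
    exact ⟨z, hz1, agree_trans (agree_symm hm) hz2⟩
  unfold extFun
  rw [if_pos hRx, if_neg hRy]
  have hagx : Agree (k + (j.toNat+1)) x (pick A hA (k + (j.toNat+1)) (tr (k + (j.toNat+1)) x)) :=
    pick_agree' A hA (hRx _)
  have hagy : Agree (NN A y) y (pick A hA (NN A y) (tr (NN A y) y)) :=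
    pick_agree' A hA (NN_spec1 A hA hRy)
  apply ext_key A hA φ j hφ _ (pick_mem A hA _ _) _ (pick_mem A hA _ _)
      (min (k + (j.toNat+1)) (Delta x y)) k
  · intro i hi
    have h1 := (hagx i (by omega)).symm
    have h2 := hm i (by omega)
    have h3 := hagy i (by omega)
    rw [h1, h2, h3]
  · rcases min_choice (k + (j.toNat+1)) (Delta x y) with h | h
    · rw [h]; push_cast; omega
    · rw [h]; push_cast; omega

lemma pointFF {x y : XX} (hxy : Agree (Delta x y) x y) (hRx : ¬ Rb A x) (hRy : ¬ Rb A y) (k : ℕ)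
    (hk : (k:ℤ) < (Delta x y : ℤ) - j) :
    extFun A hA φ j x k = extFun A hA φ j y k := by
  have hm : Agree (Delta x y) x y := hxy
  have hagx : Agree (NN A x) x (pick A hA (NN A x) (tr (NN A x) x)) :=
    pick_agree' A hA (NN_spec1 A hA hRx)
  have hagy : Agree (NN A y) y (pick A hA (NN A y) (tr (NN A y) y)) :=
    pick_agree' A hA (NN_spec1 A hA hRy)
  by_cases hxm : Delta x y ≤ NN A x
  · -- then also Delta x y ≤ NN A y
    have hym : Delta x y ≤ NN A y := by
      apply NN_max A hA hRy
      obtain ⟨z, hz1, hz2⟩ := NN_spec1 A hA hRx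
      exact ⟨z, hz1, agree_trans (agree_symm hm) (agree_mono hxm hz2)⟩
    unfold extFun
    rw [if_neg hRx, if_neg hRy]
    apply ext_key A hA φ j hφ _ (pick_mem A hA _ _) _ (pick_mem A hA _ _) (Delta x y) k
    · intro i hi
      have h1 := (hagx i (by omega)).symm
      have h2 := hm i hi
      have h3 := hagy i (by omega)
      rw [h1, h2, h3]
    · omega
  · -- deepest approximations of x and y coincide
    have hym : ¬ (Delta x y ≤ NN A y) := by
      intro hc
      apply hxm
      apply NN_max A hA hRx
      obtain ⟨z, hz1, hz2⟩ := NN_spec1 A hA hRy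
      exact ⟨z, hz1, agree_trans hm (agree_mono hc hz2)⟩
    have hxy' : NN A x = NN A y := by
      apply le_antisymm
      · apply NN_max A hA hRy
        obtain ⟨z, hz1, hz2⟩ := NN_spec1 A hA hRx
        exact ⟨z, hz1, agree_trans (agree_symm (agree_mono (by omega) hm)) hz2⟩
      · apply NN_max A hA hRx
        obtain ⟨z, hz1, hz2⟩ := NN_spec1 A hA hRy
        exact ⟨z, hz1, agree_trans (agree_mono (by omega) hm) hz2⟩
    have htr : tr (NN A x) x = tr (NN A x) y := tr_congr (agree_mono (by omega) hm)
    unfold extFun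
    rw [if_neg hRx, if_neg hRy, ← hxy', htr]

lemma extFun_pointwise {x y : XX} (hxy : x ≠ y) (k : ℕ)
    (hk : (k:ℤ) < (Delta x y : ℤ) - j) :
    extFun A hA φ j x k = extFun A hA φ j y k := by
  have hm : Agree (Delta x y) x y := agree_delta_self
  by_cases hRx : Rb A x <;> by_cases hRy : Rb A y
  · exact pointTT A hA φ j hφ hm hRx hRy k hk
  · exact pointTF A hA φ j hφ hm hRx hRy k hk
  · refine (pointTF A hA φ j hφ (x := y) (y := x) ?_ hRy hRx k ?_).symm
    · rw [delta_comm y x]; exact agree_symm hm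
    · rw [delta_comm y x]; exact hk
  · exact pointFF A hA φ j hφ hm hRx hRy k hk

lemma extFun_lip : ∀ x y : XX, distC (extFun A hA φ j x) (extFun A hA φ j y)
    ≤ (2:ℝ)^j * distC x y := by
  intro x y
  rcases eq_or_ne x y with he | he
  · rw [he, distC_self, distC_self]
    simp
  · have h1 : distC (extFun A hA φ j x) (extFun A hA φ j y)
        ≤ (2:ℝ)^(-(((Delta x y : ℤ)) - j)) :=
      dist_le_of_forall (fun k hk => extFun_pointwise A hA φ j hφ he k hk)
    rw [distC_eq he]
    calc distC (extFun A hA φ j x) (extFun A hA φ j y)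
        ≤ (2:ℝ)^(-(((Delta x y : ℤ)) - j)) := h1
    _ = (2:ℝ)^j * (2:ℝ)^(-(Delta x y : ℤ)) := by
        rw [← zpow_add₀ (by norm_num : (2:ℝ) ≠ 0)]
        congr 1
        omega

lemma ext_lemma : ∃ f : XX → XX, (∀ x y : XX, distC (f x) (f y) ≤ (2:ℝ)^j * distC x y) ∧
    ∀ x ∈ A, f x = φ x :=
  ⟨extFun A hA φ j, extFun_lip A hA φ j hφ, extFun_agree A hA φ j hφ⟩

end Ext


lemma avoid_core (H : Set XX) (i : Fin 2) (hi : ∀ x ∈ H, ∀ y ∈ H, x ≠ y → cmin x y = i)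
    (t₁ : XX) (q : ℕ) (hne : (if Even q then (0 : Fin 2) else 1) ≠ i) :
    ∃ t₂, Agree q t₂ t₁ ∧ ∀ x ∈ H, ¬ Agree (q+1) x t₂ := by
  by_cases hex : ∃ h₀ ∈ H, Agree (q+1) h₀ t₁
  · obtain ⟨h₀, hh₀, hagr⟩ := hex
    refine ⟨fun k => if k = q then !(h₀ q) else h₀ k, ?_, ?_⟩
    · intro l hl
      show (if l = q then _ else _) = _
      rw [if_neg (by omega)]
      exact hagr l (by omega)
    · intro x hx hagx
      have hxq : x q = !(h₀ q) := by
        have h2 : x q = if q = q then !(h₀ q) else h₀ q := hagx q (by omega)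
        rwa [if_pos rfl] at h2
      have hxk : ∀ k, k < q → x k = h₀ k := by
        intro k hk
        have h2 : x k = if k = q then !(h₀ q) else h₀ k := hagx k (by omega)
        rwa [if_neg (by omega : ¬ k = q)] at h2
      have hne2 : x ≠ h₀ := by
        intro he
        rw [he] at hxq
        simp at hxq
      have hd : Delta x h₀ = q := delta_eq_of (by rw [hxq]; simp) hxk
      have hcm : cmin x h₀ = i := hi x hx h₀ hh₀ hne2
      unfold cmin at hcm
      rw [hd] at hcm
      exact hne hcm
  · refine ⟨t₁, agree_refl _ _, ?_⟩
    intro x hx hagx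
    exact hex ⟨x, hx, hagx⟩

lemma avoid (H : Set XX) (hH : IsHomog cmin H) (t₁ : XX) (m₁ : ℕ) :
    ∃ t₂ m₂, m₁ ≤ m₂ ∧ Agree m₁ t₂ t₁ ∧ ∀ x ∈ H, ¬ Agree m₂ x t₂ := by
  obtain ⟨i, hi⟩ := hH
  fin_cases i
  · obtain ⟨t₂, h1, h2⟩ := avoid_core H 0 hi t₁ (2*m₁+1)
      (by rw [if_neg (by simp [Nat.even_iff])]; decide)
    exact ⟨t₂, 2*m₁+2, by omega, agree_mono (by omega) h1, h2⟩
  · obtain ⟨t₂, h1, h2⟩ := avoid_core H 1 hi t₁ (2*m₁+2)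
      (by rw [if_pos (by simp [Nat.even_iff])]; decide)
    exact ⟨t₂, 2*m₁+3, by omega, agree_mono (by omega) h1, h2⟩

lemma no_finite_cover {S : Set (Set XX)} (hS : S.Finite) :
    (∀ H ∈ S, IsHomog cmin H) →
    ∀ (s : XX) (n : ℕ), ∃ t m, n ≤ m ∧ Agree n t s ∧ ∀ H ∈ S, ∀ x ∈ H, ¬ Agree m x t := by
  refine Set.Finite.induction_on
    (motive := fun S _ => (∀ H ∈ S, IsHomog cmin H) →
      ∀ (s : XX) (n : ℕ), ∃ t m, n ≤ m ∧ Agree n t s ∧ ∀ H ∈ S, ∀ x ∈ H, ¬ Agree m x t)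
    S hS ?_ ?_
  · intro _ s n
    exact ⟨s, n, le_refl n, agree_refl n s, by simp⟩
  · intro H S' _ _ ih hhom s n
    obtain ⟨t₁, m₁, hm1, hag1, hold⟩ := ih (fun H' hH' => hhom H' (Set.mem_insert_of_mem _ hH')) s n
    obtain ⟨t₂, m₂, hm2, hag2, hnew⟩ := avoid H (hhom H (Set.mem_insert _ _)) t₁ m₁
    refine ⟨t₂, m₂, by omega, ?_, ?_⟩
    · exact agree_trans (agree_mono (by omega) hag2) hag1
    · intro H' hH' x hx hagx
      rcases Set.mem_insert_iff.mp hH' with he | hmem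
      · exact hnew x (he ▸ hx) hagx
      · apply hold H' hmem x hx
        exact agree_trans (agree_mono (by omega) hagx) (agree_mono (by omega) hag2)


/-! ### the set of cardinals in `hm` -/

def hmSet : Set Cardinal :=
  { κ | ∃ F : Set (Set XX), #F = κ ∧ (∀ H ∈ F, IsHomog cmin H) ∧ ⋃₀ F = Set.univ }

lemma hm_eq : hm cmin = sInf hmSet := rfl

lemma hmSet_nonempty : hmSet.Nonempty := by
  refine ⟨_, Set.range (fun x : XX => ({x} : Set XX)), rfl, ?_, ?_⟩
  · rintro H ⟨x, rfl⟩
    exact ⟨0, by rintro u rfl v rfl huv; exact absurd rfl huv⟩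
  · apply Set.eq_univ_of_forall
    intro z
    exact ⟨{z}, ⟨z, rfl⟩, rfl⟩

lemma hmSet_aleph0 : ∀ κ ∈ hmSet, ℵ₀ ≤ κ := by
  rintro κ ⟨F, rfl, hhom, hcov⟩
  by_contra hc
  have hfin : F.Finite := Cardinal.lt_aleph0_iff_set_finite.mp (not_le.mp hc)
  obtain ⟨t, m, _, _, hbad⟩ := no_finite_cover hfin hhom (fun _ => false) 0
  have ht : t ∈ ⋃₀ F := by rw [hcov]; trivial
  obtain ⟨H, hH, htH⟩ := ht
  exact hbad H hH t htH (agree_refl m t)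

lemma hm_mem : hm cmin ∈ hmSet := csInf_mem hmSet_nonempty

lemma hm_aleph0 : ℵ₀ ≤ hm cmin := hmSet_aleph0 _ hm_mem

/-! ### the set of cardinals in `CovLip` -/

def covSet (a b : ℝ) : Set Cardinal :=
  {μ | ∃ F G : Set (XX → XX),
    #F + #G = μ ∧ (∀ f ∈ F, LipWithC a f) ∧ (∀ g ∈ G, LipWithC b g) ∧
    ∀ x y : XX, (∃ f ∈ F, f x = y) ∨ (∃ g ∈ G, g y = x)}

lemma covLip_eq (a b : ℝ) : CovLip a b = sInf (covSet a b) := rfl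

lemma mk_XX : #XX = Cardinal.continuum := by
  rw [← Cardinal.power_def, Cardinal.mk_bool, Cardinal.mk_nat, Cardinal.two_power_aleph0]

lemma lip_const (a : ℝ) (ha : 0 ≤ a) (k : XX) : LipWithC a (fun _ => k) := by
  intro x y
  show distC k k ≤ _
  rw [distC_self]
  exact mul_nonneg ha (distC_nonneg x y)

lemma const_mem (a b : ℝ) (ha : 0 < a) (hb : 0 < b) : Cardinal.continuum ∈ covSet a b := by
  refine ⟨Set.range (fun y : XX => (fun _ => y : XX → XX)), ∅, ?_, ?_, ?_, ?_⟩
  · rw [Cardinal.mk_emptyCollection, add_zero]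
    rw [Cardinal.mk_range_eq _ (fun y y' h => congrFun h (fun _ => false))]
    exact mk_XX
  · rintro f ⟨y, rfl⟩
    exact lip_const a ha.le y
  · rintro g ⟨⟩
  · intro x y
    exact Or.inl ⟨(fun _ => y), ⟨y, rfl⟩, rfl⟩

/-! ### lower bound: `hm cmin ≤ μ` for every covering cardinal -/

def Zf (K : ℕ) (f : XX → XX) : Set XX := {z | f (E1 K (evp z)) = E2 K (odp z)}
def Zg (K : ℕ) (g : XX → XX) : Set XX := {z | g (E2 K (odp z)) = E1 K (evp z)}

lemma Zf_homog {K : ℕ} (hK : 0 < K) {a : ℝ} (haK : a < (2:ℝ)^(K:ℤ))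
    {f : XX → XX} (hf : LipWithC a f) : IsHomog cmin (Zf K f) := by
  refine ⟨0, ?_⟩
  intro z hz z' hz' hne
  have hz1 : f (E1 K (evp z)) = E2 K (odp z) := hz
  have hz2 : f (E1 K (evp z')) = E2 K (odp z') := hz'
  have hu : evp z ≠ evp z' := by
    intro he
    apply hne
    have hww : E2 K (odp z) = E2 K (odp z') := by rw [← hz1, ← hz2, he]
    have : odp z = odp z' := E2_inj hK hww
    rw [← il_evp_odp z, ← il_evp_odp z', he, this]
  have hagw : Agree (Delta (evp z) (evp z')) (odp z) (odp z') := by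
    by_cases hww : odp z = odp z'
    · rw [hww]; exact agree_refl _ _
    · have hlip := hf (E1 K (evp z)) (E1 K (evp z'))
      rw [hz1, hz2] at hlip
      rw [distC_eq (fun he => hww (E2_inj hK he)), distC_eq (fun he => hu (E1_inj hK he)),
        delta_E2 hK hww, delta_E1 hK hu] at hlip
      have h2 : (2:ℝ)^(-((2*K*Delta (odp z) (odp z') + K : ℕ):ℤ))
          < (2:ℝ)^((K:ℤ) + -((2*K*Delta (evp z) (evp z') : ℕ):ℤ)) := by
        rw [zpow_add₀ (by norm_num : (2:ℝ) ≠ 0)]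
        exact lt_of_le_of_lt hlip (mul_lt_mul_of_pos_right haK (two_zpow_pos _))
      have h3 := two_zpow_lt_rev h2
      have h4 : (2*(K:ℤ))*(Delta (evp z) (evp z')) < (2*(K:ℤ))*(Delta (odp z) (odp z') + 1) := by
        push_cast at h3 ⊢
        nlinarith [h3]
      have h5 : Delta (evp z) (evp z') ≤ Delta (odp z) (odp z') := by
        have := lt_of_mul_lt_mul_left h4 (by positivity : (0:ℤ) ≤ 2*(K:ℤ))
        omega
      intro i hi
      exact delta_lt_imp (by omega)
  apply cmin_eq_zero
  have hd : Delta z z' = 2 * Delta (evp z) (evp z') := by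
    have := delta_il_left hu hagw
    rwa [il_evp_odp, il_evp_odp] at this
  rw [hd]
  exact ⟨Delta (evp z) (evp z'), by ring⟩

lemma Zg_homog {K : ℕ} (hK : 0 < K) {b : ℝ} (hbK : b < (2:ℝ)^(K:ℤ))
    {g : XX → XX} (hg : LipWithC b g) : IsHomog cmin (Zg K g) := by
  refine ⟨1, ?_⟩
  intro z hz z' hz' hne
  have hz1 : g (E2 K (odp z)) = E1 K (evp z) := hz
  have hz2 : g (E2 K (odp z')) = E1 K (evp z') := hz'
  have hw : odp z ≠ odp z' := by
    intro he
    apply hne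
    have huu : E1 K (evp z) = E1 K (evp z') := by rw [← hz1, ← hz2, he]
    have : evp z = evp z' := E1_inj hK huu
    rw [← il_evp_odp z, ← il_evp_odp z', he, this]
  have hagu : Agree (Delta (odp z) (odp z') + 1) (evp z) (evp z') := by
    by_cases huu : evp z = evp z'
    · rw [huu]; exact agree_refl _ _
    · have hlip := hg (E2 K (odp z)) (E2 K (odp z'))
      rw [hz1, hz2] at hlip
      rw [distC_eq (fun he => huu (E1_inj hK he)), distC_eq (fun he => hw (E2_inj hK he)),
        delta_E1 hK huu, delta_E2 hK hw] at hlip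
      have h2 : (2:ℝ)^(-((2*K*Delta (evp z) (evp z') : ℕ):ℤ))
          < (2:ℝ)^((K:ℤ) + -((2*K*Delta (odp z) (odp z') + K : ℕ):ℤ)) := by
        rw [zpow_add₀ (by norm_num : (2:ℝ) ≠ 0)]
        exact lt_of_le_of_lt hlip (mul_lt_mul_of_pos_right hbK (two_zpow_pos _))
      have h3 := two_zpow_lt_rev h2
      have h4 : (2*(K:ℤ))*(Delta (odp z) (odp z')) < (2*(K:ℤ))*(Delta (evp z) (evp z')) := by
        push_cast at h3 ⊢
        nlinarith [h3]
      have h5 : Delta (odp z) (odp z') + 1 ≤ Delta (evp z) (evp z') := by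
        have := lt_of_mul_lt_mul_left h4 (by positivity : (0:ℤ) ≤ 2*(K:ℤ))
        omega
      intro i hi
      exact delta_lt_imp (by omega)
  apply cmin_eq_one
  have hd : Delta z z' = 2 * Delta (odp z) (odp z') + 1 := by
    have := delta_il_right hw hagu
    rwa [il_evp_odp, il_evp_odp] at this
  rw [hd, Nat.even_iff]
  omega

lemma hm_le_cov (a b : ℝ) : ∀ μ ∈ covSet a b, hm cmin ≤ μ := by
  rintro μ ⟨F, G, rfl, hF, hG, hcov⟩
  obtain ⟨n₁, hn₁⟩ := pow_unbounded_of_one_lt a (one_lt_two : (1:ℝ) < 2)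
  obtain ⟨n₂, hn₂⟩ := pow_unbounded_of_one_lt b (one_lt_two : (1:ℝ) < 2)
  set K := n₁ + n₂ + 1 with hKdef
  have hK : 0 < K := by omega
  have haK : a < (2:ℝ)^(K:ℤ) := by
    rw [zpow_natCast]
    exact lt_of_lt_of_le hn₁ (pow_le_pow_right₀ one_le_two (by omega))
  have hbK : b < (2:ℝ)^(K:ℤ) := by
    rw [zpow_natCast]
    exact lt_of_lt_of_le hn₂ (pow_le_pow_right₀ one_le_two (by omega))
  set 𝓗 : Set (Set XX) := ((Zf K) '' F) ∪ ((Zg K) '' G) with h𝓗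
  have hmem : #𝓗 ∈ hmSet := by
    refine ⟨𝓗, rfl, ?_, ?_⟩
    · rintro H (⟨f, hf, rfl⟩ | ⟨g, hg, rfl⟩)
      · exact Zf_homog hK haK (hF f hf)
      · exact Zg_homog hK hbK (hG g hg)
    · apply Set.eq_univ_of_forall
      intro z
      rcases hcov (E1 K (evp z)) (E2 K (odp z)) with ⟨f, hf, hfe⟩ | ⟨g, hg, hge⟩
      · exact ⟨Zf K f, Or.inl ⟨f, hf, rfl⟩, hfe⟩
      · exact ⟨Zg K g, Or.inr ⟨g, hg, rfl⟩, hge⟩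
  calc hm cmin ≤ #𝓗 := csInf_le (OrderBot.bddBelow _) hmem
  _ ≤ #((Zf K) '' F) + #((Zg K) '' G) := Cardinal.mk_union_le _ _
  _ ≤ #F + #G := add_le_add Cardinal.mk_image_le Cardinal.mk_image_le

/-! ### upper bound: building Lipschitz functions from a homogeneous family -/

def Enc (c : ℤ) (x y : XX) : XX := il (pad (1-c).toNat x) (pad (c-1).toNat y)

lemma perH (a b : ℝ) (ha : 0 < a) (hb : 0 < b) (c : ℤ)
    (hca : (2:ℝ)^(c-1) ≤ a) (hcb : (2:ℝ)^(-c) ≤ b)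
    (H : Set XX) (hH : IsHomog cmin H) :
    ∃ f g : XX → XX, LipWithC a f ∧ LipWithC b g ∧
      ∀ x y : XX, Enc c x y ∈ H → (f x = y ∨ g y = x) := by
  classical
  obtain ⟨i, hi⟩ := hH
  have lipa : ∀ f : XX → XX, (∀ x y, distC (f x) (f y) ≤ (2:ℝ)^(c-1) * distC x y) →
      LipWithC a f := by
    intro f hf x y
    exact (hf x y).trans (mul_le_mul_of_nonneg_right hca (distC_nonneg x y))
  have lipb : ∀ g : XX → XX, (∀ x y, distC (g x) (g y) ≤ (2:ℝ)^(-c) * distC x y) →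
      LipWithC b g := by
    intro g hg x y
    exact (hg x y).trans (mul_le_mul_of_nonneg_right hcb (distC_nonneg x y))
  fin_cases i
  · -- color 0 : the set is the graph of a partial `2^(c-1)`-Lipschitz function
    set A : Set XX := {x | ∃ y, Enc c x y ∈ H} with hA
    by_cases hne : A.Nonempty
    · set φ : XX → XX := fun x =>
        if h : ∃ y, Enc c x y ∈ H then h.choose else (fun _ => false) with hφ
      have hφspec : ∀ x ∈ A, Enc c x (φ x) ∈ H := by
        intro x hx
        have hx' : ∃ y, Enc c x y ∈ H := hx
        simp only [hφ, dif_pos hx']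
        exact hx'.choose_spec
      have uniq : ∀ x y y', Enc c x y ∈ H → Enc c x y' ∈ H → y = y' := by
        intro x y y' h1 h2
        by_contra hyy
        have hzz : Enc c x y ≠ Enc c x y' := by
          intro heq
          exact hyy (pad_inj (il_inj heq).2)
        have hcm := hi _ h1 _ h2 hzz
        have hev := even_of_cmin_zero hcm
        have hd : Delta (Enc c x y) (Enc c x y') = 2 * Delta (pad (c-1).toNat y) (pad (c-1).toNat y') + 1 :=
          delta_il_right (pad_ne hyy _) (agree_refl _ _)
        rw [hd, Nat.even_iff] at hev
        omega
      have hφlip : ∀ x ∈ A, ∀ x' ∈ A, distC (φ x) (φ x') ≤ (2:ℝ)^(c-1) * distC x x' := by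
        intro x hx x' hx'
        rcases eq_or_ne x x' with he | he
        · subst he
          rw [distC_self]
          exact mul_nonneg (two_zpow_pos _).le (distC_nonneg _ _)
        rcases eq_or_ne (φ x) (φ x') with hy | hy
        · rw [hy, distC_self]
          exact mul_nonneg (two_zpow_pos _).le (distC_nonneg _ _)
        have h1 := hφspec x hx
        have h2 := hφspec x' hx'
        have hzz : Enc c x (φ x) ≠ Enc c x' (φ x') := by
          intro heq
          exact he (pad_inj (il_inj heq).1)
        have hcm := hi _ h1 _ h2 hzz
        have hev := even_of_cmin_zero hcm
        have hd : Delta (Enc c x (φ x)) (Enc c x' (φ x'))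
            = min (2 * Delta (pad (1-c).toNat x) (pad (1-c).toNat x'))
                  (2 * Delta (pad (c-1).toNat (φ x)) (pad (c-1).toNat (φ x')) + 1) :=
          delta_il_min (pad_ne he _) (pad_ne hy _)
        rw [hd, Nat.even_iff] at hev
        have hle : Delta (pad (1-c).toNat x) (pad (1-c).toNat x')
            ≤ Delta (pad (c-1).toNat (φ x)) (pad (c-1).toNat (φ x')) := by omega
        rw [pad_delta he, pad_delta hy] at hle
        rw [distC_eq hy, distC_eq he, ← zpow_add₀ (by norm_num : (2:ℝ) ≠ 0)]
        apply two_zpow_mono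
        omega
      obtain ⟨f, hfl, hfa⟩ := ext_lemma A hne φ (c-1) hφlip
      refine ⟨f, (fun _ => (fun _ => false)), lipa f hfl, lip_const b hb.le _, ?_⟩
      intro x y hxy
      left
      have hx : x ∈ A := ⟨y, hxy⟩
      rw [hfa x hx]
      exact uniq x (φ x) y (hφspec x hx) hxy
    · refine ⟨(fun _ => (fun _ => false)), (fun _ => (fun _ => false)),
        lip_const a ha.le _, lip_const b hb.le _, ?_⟩
      intro x y hxy
      exact absurd (show A.Nonempty from ⟨x, ⟨y, hxy⟩⟩) hne
  · -- color 1 : the set is the cograph of a partial `2^(-c)`-Lipschitz function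
    set B : Set XX := {y | ∃ x, Enc c x y ∈ H} with hB
    by_cases hne : B.Nonempty
    · set ψ : XX → XX := fun y =>
        if h : ∃ x, Enc c x y ∈ H then h.choose else (fun _ => false) with hψ
      have hψspec : ∀ y ∈ B, Enc c (ψ y) y ∈ H := by
        intro y hy
        have hy' : ∃ x, Enc c x y ∈ H := hy
        simp only [hψ, dif_pos hy']
        exact hy'.choose_spec
      have uniq : ∀ y x x', Enc c x y ∈ H → Enc c x' y ∈ H → x = x' := by
        intro y x x' h1 h2
        by_contra hxx
        have hzz : Enc c x y ≠ Enc c x' y := by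
          intro heq
          exact hxx (pad_inj (il_inj heq).1)
        have hcm := hi _ h1 _ h2 hzz
        have hod := odd_of_cmin_one hcm
        have hd : Delta (Enc c x y) (Enc c x' y) = 2 * Delta (pad (1-c).toNat x) (pad (1-c).toNat x') :=
          delta_il_left (pad_ne hxx _) (agree_refl _ _)
        rw [hd] at hod
        exact hod ⟨_, by ring⟩
      have hψlip : ∀ y ∈ B, ∀ y' ∈ B, distC (ψ y) (ψ y') ≤ (2:ℝ)^(-c) * distC y y' := by
        intro y hy y' hy'
        rcases eq_or_ne y y' with he | he
        · subst he
          rw [distC_self]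
          exact mul_nonneg (two_zpow_pos _).le (distC_nonneg _ _)
        rcases eq_or_ne (ψ y) (ψ y') with hx | hx
        · rw [hx, distC_self]
          exact mul_nonneg (two_zpow_pos _).le (distC_nonneg _ _)
        have h1 := hψspec y hy
        have h2 := hψspec y' hy'
        have hzz : Enc c (ψ y) y ≠ Enc c (ψ y') y' := by
          intro heq
          exact he (pad_inj (il_inj heq).2)
        have hcm := hi _ h1 _ h2 hzz
        have hod := odd_of_cmin_one hcm
        have hd : Delta (Enc c (ψ y) y) (Enc c (ψ y') y')
            = min (2 * Delta (pad (1-c).toNat (ψ y)) (pad (1-c).toNat (ψ y')))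
                  (2 * Delta (pad (c-1).toNat y) (pad (c-1).toNat y') + 1) :=
          delta_il_min (pad_ne hx _) (pad_ne he _)
        rw [hd, Nat.even_iff] at hod
        have hlt : Delta (pad (c-1).toNat y) (pad (c-1).toNat y') + 1
            ≤ Delta (pad (1-c).toNat (ψ y)) (pad (1-c).toNat (ψ y')) := by omega
        rw [pad_delta he, pad_delta hx] at hlt
        rw [distC_eq hx, distC_eq he, ← zpow_add₀ (by norm_num : (2:ℝ) ≠ 0)]
        apply two_zpow_mono
        omega
      obtain ⟨g, hgl, hga⟩ := ext_lemma B hne ψ (-c) hψlip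
      refine ⟨(fun _ => (fun _ => false)), g, lip_const a ha.le _, lipb g hgl, ?_⟩
      intro x y hxy
      right
      have hy : y ∈ B := ⟨x, hxy⟩
      rw [hga y hy]
      exact uniq y (ψ y) x (hψspec y hy) hxy
    · refine ⟨(fun _ => (fun _ => false)), (fun _ => (fun _ => false)),
        lip_const a ha.le _, lip_const b hb.le _, ?_⟩
      intro x y hxy
      exact absurd (show B.Nonempty from ⟨y, ⟨x, hxy⟩⟩) hne

/-! ### case 2 : no admissible `c` forces continuum many functions -/

lemma cov_ge_continuum (a b : ℝ) (ha : 0 < a) (hb : 0 < b)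
    (hnc : ¬(∃ c : ℤ, (2 : ℝ) ^ (c - 1) ≤ a ∧ (2 : ℝ) ^ (-c) ≤ b)) :
    ∀ μ ∈ covSet a b, Cardinal.continuum ≤ μ := by
  classical
  -- find d with a < 2^d and b < 2^(-d)
  set l : ℤ := Int.log 2 b with hl
  have hlb : (2:ℝ)^l ≤ b := by
    have := Int.zpow_log_le_self (b := 2) (by norm_num) hb
    simpa [hl] using this
  have hub : b < (2:ℝ)^(l+1) := by
    have := Int.lt_zpow_succ_log_self (b := 2) (by norm_num) b
    simpa [hl] using this
  have haa : a < (2:ℝ)^(-l-1) := by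
    by_contra hcon
    apply hnc
    refine ⟨-l, ?_, ?_⟩
    · have : (-l : ℤ) - 1 = -l-1 := by ring
      rw [this]
      exact not_lt.mp hcon
    · rw [neg_neg]
      exact hlb
  set d : ℤ := -l-1 with hd
  have hbb : b < (2:ℝ)^(-d) := by
    have : -d = l+1 := by omega
    rw [this]
    exact hub
  rintro μ ⟨F, G, rfl, hF, hG, hcov⟩
  set m : ℕ := d.toNat with hmdef
  set n : ℕ := (-d).toNat with hndef
  have hmn : (m:ℤ) - (n:ℤ) = d := by omega
  set Φ : XX → (↥F ⊕ ↥G) := fun t =>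
    if h : ∃ f ∈ F, f (pad m t) = pad n t then Sum.inl ⟨h.choose, h.choose_spec.1⟩
    else Sum.inr ⟨((hcov (pad m t) (pad n t)).resolve_left h).choose,
      ((hcov (pad m t) (pad n t)).resolve_left h).choose_spec.1⟩ with hΦ
  have hinj : Function.Injective Φ := by
    intro s t heq
    by_contra hst
    by_cases hs : ∃ f ∈ F, f (pad m s) = pad n s <;>
      by_cases ht : ∃ f ∈ F, f (pad m t) = pad n t
    · rw [hΦ] at heq
      simp only [dif_pos hs, dif_pos ht] at heq
      have hval : hs.choose = ht.choose := congrArg Subtype.val (Sum.inl.inj heq)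
      have hfs : hs.choose (pad m s) = pad n s := hs.choose_spec.2
      have hft : hs.choose (pad m t) = pad n t := by rw [hval]; exact ht.choose_spec.2
      have hlip := hF hs.choose hs.choose_spec.1 (pad m s) (pad m t)
      rw [hfs, hft, distC_eq (pad_ne hst n), distC_eq (pad_ne hst m),
        pad_delta hst, pad_delta hst] at hlip
      have h2 : (2:ℝ)^(-((n + Delta s t : ℕ):ℤ)) < (2:ℝ)^(d + -((m + Delta s t : ℕ):ℤ)) := by
        rw [zpow_add₀ (by norm_num : (2:ℝ) ≠ 0)]
        exact lt_of_le_of_lt hlip (mul_lt_mul_of_pos_right haa (two_zpow_pos _))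
      have h3 := two_zpow_lt_rev h2
      push_cast at h3
      omega
    · rw [hΦ] at heq
      simp only [dif_pos hs, dif_neg ht] at heq
      exact absurd heq (by simp)
    · rw [hΦ] at heq
      simp only [dif_neg hs, dif_pos ht] at heq
      exact absurd heq (by simp)
    · rw [hΦ] at heq
      simp only [dif_neg hs, dif_neg ht] at heq
      set hgs := (hcov (pad m s) (pad n s)).resolve_left hs with hgsd
      set hgt := (hcov (pad m t) (pad n t)).resolve_left ht with hgtd
      have hval : hgs.choose = hgt.choose := congrArg Subtype.val (Sum.inr.inj heq)
      have h1 : hgs.choose (pad n s) = pad m s := hgs.choose_spec.2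
      have h2 : hgs.choose (pad n t) = pad m t := by rw [hval]; exact hgt.choose_spec.2
      have hlip := hG hgs.choose hgs.choose_spec.1 (pad n s) (pad n t)
      rw [h1, h2, distC_eq (pad_ne hst m), distC_eq (pad_ne hst n),
        pad_delta hst, pad_delta hst] at hlip
      have h4 : (2:ℝ)^(-((m + Delta s t : ℕ):ℤ)) < (2:ℝ)^(-d + -((n + Delta s t : ℕ):ℤ)) := by
        rw [zpow_add₀ (by norm_num : (2:ℝ) ≠ 0)]
        exact lt_of_le_of_lt hlip (mul_lt_mul_of_pos_right hbb (two_zpow_pos _))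
      have h5 := two_zpow_lt_rev h4
      push_cast at h5
      omega
  calc Cardinal.continuum = #XX := mk_XX.symm
  _ ≤ #(↥F ⊕ ↥G) := Cardinal.mk_le_of_injective hinj
  _ = #F + #G := by simp

end GGK

theorem stmt14 (a b : ℝ) (ha : 0 < a) (hb : 0 < b) :
    ((∃ c : ℤ, (2 : ℝ) ^ (c - 1) ≤ a ∧ (2 : ℝ) ^ (-c) ≤ b) →
      CovLip a b = hm cmin) ∧
    (¬(∃ c : ℤ, (2 : ℝ) ^ (c - 1) ≤ a ∧ (2 : ℝ) ^ (-c) ≤ b) →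
      CovLip a b = Cardinal.continuum) := by
  classical
  constructor
  · rintro ⟨c, hca, hcb⟩
    apply le_antisymm
    · -- CovLip ≤ hm
      obtain ⟨𝓕, h𝓕card, h𝓕hom, h𝓕cov⟩ := GGK.hm_mem
      have hchoice : ∀ H : ↥𝓕, ∃ f g : GGK.XX → GGK.XX, LipWithC a f ∧ LipWithC b g ∧
          ∀ x y : GGK.XX, GGK.Enc c x y ∈ (H : Set GGK.XX) → (f x = y ∨ g y = x) :=
        fun H => GGK.perH a b ha hb c hca hcb H (h𝓕hom H H.2)
      choose ff gg hf hg hfg using hchoice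
      have hmem : #(Set.range ff) + #(Set.range gg) ∈ GGK.covSet a b := by
        refine ⟨Set.range ff, Set.range gg, rfl, ?_, ?_, ?_⟩
        · rintro f ⟨H, rfl⟩
          exact hf H
        · rintro g ⟨H, rfl⟩
          exact hg H
        · intro x y
          have hz : GGK.Enc c x y ∈ ⋃₀ 𝓕 := by rw [h𝓕cov]; trivial
          obtain ⟨H, hH, hzH⟩ := hz
          rcases hfg ⟨H, hH⟩ x y hzH with h | h
          · exact Or.inl ⟨ff ⟨H, hH⟩, ⟨⟨H, hH⟩, rfl⟩, h⟩
          · exact Or.inr ⟨gg ⟨H, hH⟩, ⟨⟨H, hH⟩, rfl⟩, h⟩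
      calc CovLip a b ≤ #(Set.range ff) + #(Set.range gg) :=
            csInf_le (OrderBot.bddBelow _) hmem
      _ ≤ #↥𝓕 + #↥𝓕 := add_le_add Cardinal.mk_range_le Cardinal.mk_range_le
      _ = hm cmin + hm cmin := by rw [h𝓕card]
      _ = hm cmin := Cardinal.add_eq_self GGK.hm_aleph0
    · -- hm ≤ CovLip
      exact le_csInf ⟨Cardinal.continuum, GGK.const_mem a b ha hb⟩ (GGK.hm_le_cov a b)
  · intro hnc
    apply le_antisymm
    · exact csInf_le (OrderBot.bddBelow _) (GGK.const_mem a b ha hb)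
    · exact le_csInf ⟨Cardinal.continuum, GGK.const_mem a b ha hb⟩
        (GGK.cov_ge_continuum a b ha hb hnc)
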